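/- Fix \kappa > 0 and \mu_0 = \kappa / \tanh(\kappa). There exist \delta_1 > 0 and C_1 > 0 such that for all (\ell, \xi) \in [-\delta_1, \delta_1]^2, \; \big| \kappa - \sqrt{\mu_0}\,\big(F(|(\ell, \kappa \mp \xi)|) + F(|(\ell,\xi)|)\big) \big| \geq C_1 \, |(\ell,\xi)| for each choice of sign, where F(r) = \sqrt{r \tanh r} and |(a,b)| = \sqrt{a^2+b^2}. -/

import Mathlib

noncomputable def Fsw : ℝ → ℝ := fun r => Real.sqrt (r * Real.tanh r)

lemma tanh_pos' {x : ℝ} (hx : 0 < x) : 0 < Real.tanh x := by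
  rw [Real.tanh_eq_sinh_div_cosh]
  exact div_pos (by rwa [Real.sinh_pos_iff]) (Real.cosh_pos x)

lemma tanh_nonneg' {x : ℝ} (hx : 0 ≤ x) : 0 ≤ Real.tanh x := by
  rcases hx.eq_or_lt with h | h
  · simp [← h]
  · exact (tanh_pos' h).le

lemma tanh_mono' {a b : ℝ} (hab : a ≤ b) : Real.tanh a ≤ Real.tanh b := by
  rw [Real.tanh_eq_sinh_div_cosh, Real.tanh_eq_sinh_div_cosh,
    div_le_div_iff₀ (Real.cosh_pos a) (Real.cosh_pos b)]
  have h : Real.sinh (a - b) ≤ 0 := by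
    have := Real.sinh_le_sinh.mpr (show a - b ≤ 0 by linarith)
    simpa using this
  have hsub := Real.sinh_sub a b
  linarith

lemma hasDerivAt_tanh' (x : ℝ) :
    HasDerivAt Real.tanh (1 / Real.cosh x ^ 2) x := by
  have h := (Real.hasDerivAt_sinh x).div (Real.hasDerivAt_cosh x) (Real.cosh_pos x).ne'
  have heq : Real.tanh = fun y => Real.sinh y / Real.cosh y := by
    funext y; exact Real.tanh_eq_sinh_div_cosh y
  rw [heq]
  refine h.congr_deriv ?_
  have h1 := Real.cosh_sq_sub_sinh_sq x
  rw [div_left_inj' (pow_pos (Real.cosh_pos x) 2).ne']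
  nlinarith [h1]

lemma tanh_scale {b : ℝ} (hb : 0 < b) {x : ℝ} (hx0 : 0 ≤ x) (hxb : x ≤ b) :
    x * Real.tanh b ≤ b * Real.tanh x := by
  set f : ℝ → ℝ := fun y => b * Real.tanh y - y * Real.tanh b with hf
  set f' : ℝ → ℝ := fun y => b * (1 / Real.cosh y ^ 2) - Real.tanh b with hf'
  set f'' : ℝ → ℝ := fun y =>
    b * (-(2 * Real.cosh y ^ 1 * Real.sinh y) / (Real.cosh y ^ 2) ^ 2) with hf''
  have hconc : ConcaveOn ℝ (Set.Ici (0:ℝ)) f := by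
    apply concaveOn_of_hasDerivWithinAt2_nonpos (convex_Ici 0) (f' := f') (f'' := f'')
    · have hc : Continuous f := by
        have : Continuous Real.tanh := by
          have : Real.tanh = fun y => Real.sinh y / Real.cosh y := by
            funext y; exact Real.tanh_eq_sinh_div_cosh y
          rw [this]
          exact Real.continuous_sinh.div Real.continuous_cosh fun y => (Real.cosh_pos y).ne'
        fun_prop
      exact hc.continuousOn
    · intro y _
      have : HasDerivAt f (f' y) y := by
        have h1 := (hasDerivAt_tanh' y).const_mul b
        have h2 := (hasDerivAt_id y).mul_const (Real.tanh b)
        have := h1.sub h2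
        simpa [hf, hf', Pi.sub_def] using this
      exact this.hasDerivWithinAt
    · intro y _
      have hcosh : HasDerivAt (fun z => Real.cosh z ^ 2)
          (2 * Real.cosh y ^ 1 * Real.sinh y) y := (Real.hasDerivAt_cosh y).pow 2
      have hinv : HasDerivAt (fun z => (Real.cosh z ^ 2)⁻¹)
          (-(2 * Real.cosh y ^ 1 * Real.sinh y) / (Real.cosh y ^ 2) ^ 2) y :=
        hcosh.inv (by positivity)
      have : HasDerivAt f' (f'' y) y := by
        have h1 := hinv.const_mul b
        have : HasDerivAt (fun z => b * (Real.cosh z ^ 2)⁻¹ - Real.tanh b) (f'' y) y := by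
          simpa [hf''] using h1.sub_const (Real.tanh b)
        convert this using 1
        funext z
        simp [hf', one_div]
      exact this.hasDerivWithinAt
    · intro y hy
      rw [interior_Ici] at hy
      have hy0 : 0 < y := hy
      have hs : 0 ≤ Real.sinh y := by rw [Real.sinh_nonneg_iff]; exact hy0.le
      have hc := Real.cosh_pos y
      have hnum : -(2 * Real.cosh y ^ 1 * Real.sinh y) ≤ 0 := by nlinarith
      have : -(2 * Real.cosh y ^ 1 * Real.sinh y) / (Real.cosh y ^ 2) ^ 2 ≤ 0 :=
        div_nonpos_of_nonpos_of_nonneg hnum (by positivity)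
      simp only [hf'']
      exact mul_nonpos_of_nonneg_of_nonpos hb.le this
  have h0 : (0:ℝ) ∈ Set.Ici (0:ℝ) := Set.mem_Ici.mpr le_rfl
  have hbmem : b ∈ Set.Ici (0:ℝ) := hb.le
  have hw1 : (0:ℝ) ≤ 1 - x / b := by
    have : x / b ≤ 1 := (div_le_one hb).mpr hxb
    linarith
  have hw2 : (0:ℝ) ≤ x / b := div_nonneg hx0 hb.le
  have hsum : (1 - x / b) + x / b = 1 := by ring
  have := hconc.2 h0 hbmem hw1 hw2 hsum
  have hxeq : (1 - x / b) • (0:ℝ) + (x / b) • b = x := by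
    simp only [smul_eq_mul, mul_zero, zero_add]
    field_simp
  rw [hxeq] at this
  have hf0 : f 0 = 0 := by simp [hf]
  have hfb : f b = 0 := by simp only [hf]; ring
  rw [hf0, hfb] at this
  simp only [smul_eq_mul, mul_zero, add_zero, zero_add] at this
  have hfx : 0 ≤ f x := by linarith
  simp only [hf] at hfx
  linarith

lemma Fsw_mono {a b : ℝ} (ha : 0 ≤ a) (hab : a ≤ b) : Fsw a ≤ Fsw b := by
  unfold Fsw
  exact Real.sqrt_le_sqrt
    (mul_le_mul hab (tanh_mono' hab) (tanh_nonneg' ha) (le_trans ha hab))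

lemma sqrtmu_Fsw_ge {κ x : ℝ} (hκ : 0 < κ) (hx0 : 0 ≤ x) (hxκ : x ≤ κ) :
    x ≤ Real.sqrt (κ / Real.tanh κ) * Fsw x := by
  have htκ := tanh_pos' hκ
  have h1 : Real.sqrt (κ / Real.tanh κ) * Fsw x
      = Real.sqrt ((κ / Real.tanh κ) * (x * Real.tanh x)) :=
    (Real.sqrt_mul (by positivity) _).symm
  rw [h1]
  have hts := tanh_scale hκ hx0 hxκ
  have h2 : x ^ 2 ≤ (κ / Real.tanh κ) * (x * Real.tanh x) := by
    rw [div_mul_eq_mul_div, le_div_iff₀ htκ]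
    nlinarith
  calc x = Real.sqrt (x ^ 2) := (Real.sqrt_sq hx0).symm
    _ ≤ _ := Real.sqrt_le_sqrt h2

lemma sqrtmu_Fsw_ge2 {κ r : ℝ} (hκ : 0 < κ) (hr0 : 0 ≤ r) (hr : r ≤ κ / 2) :
    Real.sqrt (2 * Real.tanh (κ / 2) / Real.tanh κ) * r
      ≤ Real.sqrt (κ / Real.tanh κ) * Fsw r := by
  have htκ := tanh_pos' hκ
  have hκ2 : (0:ℝ) < κ / 2 := by linarith
  have hts := tanh_scale hκ2 hr0 hr
  have h1 : Real.sqrt (κ / Real.tanh κ) * Fsw r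
      = Real.sqrt ((κ / Real.tanh κ) * (r * Real.tanh r)) :=
    (Real.sqrt_mul (by positivity) _).symm
  have h2 : Real.sqrt (2 * Real.tanh (κ / 2) / Real.tanh κ) * r
      = Real.sqrt ((2 * Real.tanh (κ / 2) / Real.tanh κ) * r ^ 2) := by
    rw [Real.sqrt_mul (div_nonneg (mul_nonneg (by norm_num) (tanh_nonneg' hκ2.le)) htκ.le),
      Real.sqrt_sq hr0]
  rw [h1, h2]
  apply Real.sqrt_le_sqrt
  rw [div_mul_eq_mul_div, div_mul_eq_mul_div, div_le_div_iff₀ htκ htκ]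
  have hmul := mul_le_mul_of_nonneg_right hts (mul_nonneg hr0 htκ.le)
  nlinarith [hmul]

lemma rho_gt_one {κ : ℝ} (hκ : 0 < κ) :
    1 < 2 * Real.tanh (κ / 2) / Real.tanh κ := by
  have htκ := tanh_pos' hκ
  rw [lt_div_iff₀ htκ, one_mul]
  have ha0 : 0 < κ / 2 := by linarith
  have hs : 0 < Real.sinh (κ / 2) := by rwa [Real.sinh_pos_iff]
  have hc := Real.cosh_pos (κ / 2)
  have e1 : Real.sinh κ = 2 * Real.sinh (κ / 2) * Real.cosh (κ / 2) := by
    rw [← Real.sinh_two_mul]; congr 1; ring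
  have e2 : Real.cosh κ = Real.cosh (κ / 2) ^ 2 + Real.sinh (κ / 2) ^ 2 := by
    rw [← Real.cosh_two_mul]; congr 1; ring
  rw [Real.tanh_eq_sinh_div_cosh, Real.tanh_eq_sinh_div_cosh, ← mul_div_assoc,
    div_lt_div_iff₀ (Real.cosh_pos κ) hc, e1, e2]
  nlinarith [mul_pos hs (mul_pos hs hs)]

lemma aux_sep (κ : ℝ) (hκ : 0 < κ) {s r : ℝ} (hsr : κ - r ≤ s) (hr0 : 0 ≤ r)
    (hr : r ≤ κ / 2) :
    (Real.sqrt (2 * Real.tanh (κ / 2) / Real.tanh κ) - 1) * r ≤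
      |κ - Real.sqrt (κ / Real.tanh κ) * (Fsw s + Fsw r)| := by
  have h1 : κ - r ≤ Real.sqrt (κ / Real.tanh κ) * Fsw s := by
    calc κ - r ≤ Real.sqrt (κ / Real.tanh κ) * Fsw (κ - r) :=
          sqrtmu_Fsw_ge hκ (by linarith) (by linarith)
      _ ≤ Real.sqrt (κ / Real.tanh κ) * Fsw s :=
          mul_le_mul_of_nonneg_left (Fsw_mono (by linarith) hsr) (Real.sqrt_nonneg _)
  have h2 := sqrtmu_Fsw_ge2 hκ hr0 hr
  have hE : κ - Real.sqrt (κ / Real.tanh κ) * (Fsw s + Fsw r)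
      ≤ (1 - Real.sqrt (2 * Real.tanh (κ / 2) / Real.tanh κ)) * r := by
    rw [mul_add]
    nlinarith
  have : (Real.sqrt (2 * Real.tanh (κ / 2) / Real.tanh κ) - 1) * r
      ≤ -(κ - Real.sqrt (κ / Real.tanh κ) * (Fsw s + Fsw r)) := by linarith
  exact le_trans this (neg_le_abs _)

theorem eigenvalue_separation (κ : ℝ) (hκ : 0 < κ) (μ0 : ℝ)
    (hμ0 : μ0 = κ / Real.tanh κ) :
    ∃ δ1 > (0:ℝ), ∃ C1 > (0:ℝ), ∀ ℓ ξ : ℝ, |ℓ| ≤ δ1 → |ξ| ≤ δ1 →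
      C1 * Real.sqrt (ℓ^2 + ξ^2) ≤
        |κ - Real.sqrt μ0 * (Fsw (Real.sqrt (ℓ^2 + (κ - ξ)^2)) + Fsw (Real.sqrt (ℓ^2 + ξ^2)))| ∧
      C1 * Real.sqrt (ℓ^2 + ξ^2) ≤
        |κ - Real.sqrt μ0 * (Fsw (Real.sqrt (ℓ^2 + (κ + ξ)^2)) + Fsw (Real.sqrt (ℓ^2 + ξ^2)))| := by
  have hρ := rho_gt_one hκ
  have hC : 0 < Real.sqrt (2 * Real.tanh (κ / 2) / Real.tanh κ) - 1 := by
    have : Real.sqrt 1 < Real.sqrt (2 * Real.tanh (κ / 2) / Real.tanh κ) :=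
      Real.sqrt_lt_sqrt (by norm_num) hρ
    rw [Real.sqrt_one] at this
    linarith
  refine ⟨κ / 4, by positivity,
    Real.sqrt (2 * Real.tanh (κ / 2) / Real.tanh κ) - 1, hC, ?_⟩
  intro ℓ ξ hl hx
  set r := Real.sqrt (ℓ ^ 2 + ξ ^ 2) with hrdef
  have hr0 : 0 ≤ r := Real.sqrt_nonneg _
  have hl2 : ℓ ^ 2 ≤ (κ / 4) ^ 2 := by
    rw [← sq_abs ℓ]; exact pow_le_pow_left₀ (abs_nonneg ℓ) hl 2
  have hx2 : ξ ^ 2 ≤ (κ / 4) ^ 2 := by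
    rw [← sq_abs ξ]; exact pow_le_pow_left₀ (abs_nonneg ξ) hx 2
  have hrκ : r ≤ κ / 2 := by
    calc r ≤ Real.sqrt ((κ / 2) ^ 2) := Real.sqrt_le_sqrt (by nlinarith)
      _ = κ / 2 := Real.sqrt_sq (by positivity)
  have hxr : |ξ| ≤ r := by
    calc |ξ| = Real.sqrt (ξ ^ 2) := (Real.sqrt_sq_eq_abs ξ).symm
      _ ≤ r := Real.sqrt_le_sqrt (by nlinarith [sq_nonneg ℓ])
  rw [hμ0]
  constructor
  · apply aux_sep κ hκ _ hr0 hrκ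
    have h1 : ξ ≤ r := le_trans (le_abs_self ξ) hxr
    calc κ - r ≤ κ - ξ := by linarith
      _ ≤ |κ - ξ| := le_abs_self _
      _ = Real.sqrt ((κ - ξ) ^ 2) := (Real.sqrt_sq_eq_abs _).symm
      _ ≤ Real.sqrt (ℓ ^ 2 + (κ - ξ) ^ 2) := Real.sqrt_le_sqrt (by nlinarith [sq_nonneg ℓ])
  · apply aux_sep κ hκ _ hr0 hrκ
    have h1 : -r ≤ ξ := le_trans (neg_le_neg hxr) (neg_abs_le ξ)
    calc κ - r ≤ κ + ξ := by linarith
      _ ≤ |κ + ξ| := le_abs_self _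
      _ = Real.sqrt ((κ + ξ) ^ 2) := (Real.sqrt_sq_eq_abs _).symm
      _ ≤ Real.sqrt (ℓ ^ 2 + (κ + ξ) ^ 2) := Real.sqrt_le_sqrt (by nlinarith [sq_nonneg ℓ])
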